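/- Let τ > 0 and let E₀, E₁ : ℝ → ℝ be measurable functions. Then the backward Störmer–Verlet step Ψ : ℝ × ℝ → ℝ × ℝ preserves the Lebesgue (volume) measure on ℝ × ℝ: the pushforward of the volume measure under Ψ equals the volume measure. -/

import Mathlib

open MeasureTheory

/-- The backward Störmer–Verlet step for the Vlasov–Poisson characteristics. -/
noncomputable def svStep (τ : ℝ) (E0 E1 : ℝ → ℝ) : ℝ × ℝ → ℝ × ℝ :=
  fun p =>
    let vhalf := p.2 + (τ / 2) * E1 p.1
    let x1 := p.1 - τ * vhalf
    (x1, vhalf + (τ / 2) * E0 x1)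

theorem svStep_measurePreserving (τ : ℝ) (hτ : 0 < τ) (E0 E1 : ℝ → ℝ)
    (hE0 : Measurable E0) (hE1 : Measurable E1) :
    MeasurePreserving (svStep τ E0 E1)
      (volume : Measure (ℝ × ℝ)) (volume : Measure (ℝ × ℝ)) := by
  have h1 : MeasurePreserving (fun p : ℝ × ℝ => (p.1, p.2 + (τ / 2) * E1 p.1))
      volume volume := by
    rw [MeasureTheory.Measure.volume_eq_prod]
    refine (MeasurePreserving.id volume).skew_product
      (g := fun x v => v + (τ / 2) * E1 x) ?_
      (ae_of_all _ fun x => (measurePreserving_add_right volume _).map_eq)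
    exact measurable_snd.add ((hE1.comp measurable_fst).const_mul _)
  have h3 : MeasurePreserving (fun p : ℝ × ℝ => (p.1, p.2 + (τ / 2) * E0 p.1))
      volume volume := by
    rw [MeasureTheory.Measure.volume_eq_prod]
    refine (MeasurePreserving.id volume).skew_product
      (g := fun x v => v + (τ / 2) * E0 x) ?_
      (ae_of_all _ fun x => (measurePreserving_add_right volume _).map_eq)
    exact measurable_snd.add ((hE0.comp measurable_fst).const_mul _)
  have hsk : MeasurePreserving (fun p : ℝ × ℝ => (p.1, p.2 - τ * p.1))
      volume volume := by
    rw [MeasureTheory.Measure.volume_eq_prod]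
    refine (MeasurePreserving.id volume).skew_product
      (g := fun x v => v - τ * x) ?_
      (ae_of_all _ fun x => (measurePreserving_sub_right volume _).map_eq)
    exact measurable_snd.sub (measurable_fst.const_mul _)
  have hswap : MeasurePreserving (Prod.swap : ℝ × ℝ → ℝ × ℝ) volume volume := by
    rw [MeasureTheory.Measure.volume_eq_prod]
    exact Measure.measurePreserving_swap
  have h2 : MeasurePreserving (fun p : ℝ × ℝ => (p.1 - τ * p.2, p.2))
      volume volume := (hswap.comp hsk).comp hswap
  have hfinal := (h3.comp h2).comp h1
  convert hfinal using 1
  rfl
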